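/- For a partition λ = (λ_1 ≥ λ_2 ≥ ⋯ ≥ λ_j ≥ 0), define the j × j matrix A_λ with entries (A_λ)_{i,j'} = binom(λ_{j'} + 1, j' − i + 1). Then det(A_λ) equals the number of monotone lattice paths (with north and east unit steps) from (0,0) to the endpoint of the staircase boundary of λ that lie weakly above the southeast boundary of the Young diagram of λ. Equivalently, det(A_λ) counts lattice paths weakly dominating the path P(X) where X ∈ {0,2}^{j+m} is the word whose 2s are at positions a_i = m + i − λ_i. -/

import Mathlib

open Finset

/-- The LGV determinant matrix. -/
def Dmat (j : ℕ) (lam : Fin j → ℕ) : Matrix (Fin j) (Fin j) ℤ :=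
  Matrix.of fun i i' => if (i : ℕ) ≤ (i' : ℕ) + 1 then
    (((lam i' + 1).choose ((i' : ℕ) + 1 - i)) : ℤ) else 0

/-- Number of antitone sequences `w` with `w i ≤ lam i`. -/
def Fcount (j : ℕ) (lam : Fin j → ℕ) : ℕ :=
  ((Fintype.piFinset fun i => Finset.range (lam i + 1)).filter
    (fun w => ∀ a b : Fin j, a ≤ b → w b ≤ w a)).card

lemma Fcount_j0 (lam : Fin 0 → ℕ) : Fcount 0 lam = 1 := by
  rw [Fcount, Finset.filter_true_of_mem (fun w _ => fun a => a.elim0)]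
  simp

lemma Fcount_all_zero (j : ℕ) (lam : Fin j → ℕ) (h : ∀ i, lam i = 0) :
    Fcount j lam = 1 := by
  rw [Fcount]
  convert Finset.card_singleton (fun _ : Fin j => (0 : ℕ))
  ext w
  simp only [Finset.mem_filter, Fintype.mem_piFinset, Finset.mem_range,
    Finset.mem_singleton]
  constructor
  · rintro ⟨h1, -⟩
    funext i
    have := h1 i
    rw [h i] at this
    omega
  · rintro rfl
    exact ⟨fun i => by simp [h i], fun a b _ => le_refl 0⟩

lemma Dmat_all_zero (j : ℕ) (lam : Fin j → ℕ) (h : ∀ i, lam i = 0) :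
    (Dmat j lam).det = 1 := by
  rw [Matrix.det_of_lowerTriangular _ ?ht]
  · rw [Finset.prod_congr rfl (fun i _ => ?_), Finset.prod_const_one]
    simp [Dmat, h]
  · intro i i' hlt
    have : (i : ℕ) < i' := hlt
    simp only [Dmat, Matrix.of_apply, h]
    split_ifs with hle
    · have : (i' : ℕ) + 1 - i ≥ 2 := by omega
      norm_cast
      rw [Nat.choose_eq_zero_of_lt (by omega)]
    · rfl

lemma Fcount_rec (j : ℕ) (lam : Fin j → ℕ) (kc : Fin j)
    (h1 : ∀ i, i ≤ kc → lam i = lam kc) (h2 : ∀ i, kc < i → lam i < lam kc)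
    (hpos : 1 ≤ lam kc) :
    Fcount j lam = Fcount j (Function.update lam kc (lam kc - 1))
      + Fcount (j - (kc.1+1))
          (fun r => lam ⟨kc.1+1+r.1, by have := r.isLt; have := kc.isLt; omega⟩) := by
  classical
  rw [Fcount, ← Finset.card_filter_add_card_filter_not
    (p := fun w => w kc = lam kc), add_comm]
  have e2 : (((Fintype.piFinset fun i => Finset.range (lam i + 1)).filter
        (fun w => ∀ a b : Fin j, a ≤ b → w b ≤ w a)).filter
        (fun w => ¬ w kc = lam kc))
      = ((Fintype.piFinset fun i =>
          Finset.range (Function.update lam kc (lam kc - 1) i + 1)).filter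
        (fun w => ∀ a b : Fin j, a ≤ b → w b ≤ w a)) := by
    rw [Finset.filter_filter]
    ext w
    simp only [Finset.mem_filter, Fintype.mem_piFinset, Finset.mem_range]
    constructor
    · rintro ⟨hbd, hanti, hne⟩
      refine ⟨fun i => ?_, hanti⟩
      rcases eq_or_ne i kc with rfl | hik
      · rw [Function.update_self]; have := hbd i; omega
      · rw [Function.update_of_ne hik]; exact hbd i
    · rintro ⟨hbd, hanti⟩
      refine ⟨fun i => ?_, hanti, ?_⟩
      · rcases eq_or_ne i kc with rfl | hik
        · have := hbd i; rw [Function.update_self] at this; omega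
        · have := hbd i; rwa [Function.update_of_ne hik] at this
      · have := hbd kc; rw [Function.update_self] at this; omega
  have e1 : (((Fintype.piFinset fun i => Finset.range (lam i + 1)).filter
        (fun w => ∀ a b : Fin j, a ≤ b → w b ≤ w a)).filter
        (fun w => w kc = lam kc)).card
      = Fcount (j - (kc.1+1))
          (fun r => lam ⟨kc.1+1+r.1, by have := r.isLt; have := kc.isLt; omega⟩) := by
    rw [Fcount, Finset.filter_filter]
    refine Finset.card_nbij'
      (i := fun w => fun r : Fin (j-(kc.1+1)) =>
        w ⟨kc.1+1+r.1, by have := r.isLt; have := kc.isLt; omega⟩)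
      (j := fun v => fun i : Fin j => if h : i.1 ≤ kc.1 then lam kc
        else v ⟨i.1 - (kc.1+1), by have := i.isLt; omega⟩) ?_ ?_ ?_ ?_
    · intro w hw
      simp only [Finset.mem_filter, Fintype.mem_piFinset, Finset.mem_range, Finset.mem_coe] at hw ⊢
      obtain ⟨hbd, hanti, hval⟩ := hw
      refine ⟨fun r => hbd _, ?_⟩
      intro a b hab
      have hab' : a.1 ≤ b.1 := Fin.le_def.mp hab
      exact hanti _ _ (by rw [Fin.mk_le_mk]; omega)
    · intro v hv
      simp only [Finset.mem_filter, Fintype.mem_piFinset, Finset.mem_range, Finset.mem_coe] at hv ⊢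
      obtain ⟨hbd, hanti⟩ := hv
      have hvle : ∀ r, v r ≤ lam kc := by
        intro r
        have hb := hbd r
        have hr := r.isLt
        refine le_trans (Nat.lt_succ_iff.mp hb) (le_of_lt (h2 _ ?_))
        exact Fin.lt_def.mpr (show kc.1 < kc.1+1+r.1 by omega)
      refine ⟨?_, ?_, ?_⟩
      · intro i
        by_cases h : i.1 ≤ kc.1
        · rw [dif_pos h, h1 i (by rw [Fin.le_def]; omega)]
          omega
        · rw [dif_neg h]
          have hb := hbd ⟨i.1 - (kc.1+1), by have := i.isLt; omega⟩
          have heq : lam ⟨kc.1+1+(i.1 - (kc.1+1)), by have := i.isLt; omega⟩ = lam i := by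
            congr 1
            exact Fin.ext (by simp; omega)
          rw [heq] at hb
          omega
      · intro a b hab
        have hab' : a.1 ≤ b.1 := Fin.le_def.mp hab
        by_cases ha : a.1 ≤ kc.1 <;> by_cases hb : b.1 ≤ kc.1
        · rw [dif_pos ha, dif_pos hb]
        · rw [dif_pos ha, dif_neg hb]; exact hvle _
        · omega
        · rw [dif_neg ha, dif_neg hb]
          exact hanti _ _ (by rw [Fin.mk_le_mk]; omega)
      · rw [dif_pos (le_refl kc.1)]
    · intro w hw
      simp only [Finset.mem_filter, Fintype.mem_piFinset, Finset.mem_range, Finset.mem_coe] at hw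
      obtain ⟨hbd, hanti, hval⟩ := hw
      funext i
      dsimp only
      by_cases h : i.1 ≤ kc.1
      · rw [dif_pos h]
        have hle := hbd i
        have h1' := h1 i (by rw [Fin.le_def]; omega)
        have hge : w kc ≤ w i := hanti i kc (by rw [Fin.le_def]; omega)
        omega
      · rw [dif_neg h]
        congr 1
        exact Fin.ext (by simp; omega)
    · intro v hv
      funext r
      dsimp only
      have hnot : ¬ (kc.1+1+r.1 ≤ kc.1) := by omega
      rw [dif_neg hnot]
      congr 1
      exact Fin.ext (by simp)
  rw [e1, e2]
  simp only [Fcount]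

def Bmat (j : ℕ) (lam : Fin j → ℕ) (kcv L t : ℕ) : Matrix (Fin j) (Fin j) ℤ :=
  Matrix.of fun i s => if (s : ℕ) ≤ kcv ∧ t ≤ (s : ℕ) then
    (if (i : ℕ) ≤ (s : ℕ) then (L.choose ((s : ℕ) - i) : ℤ) else 0)
  else Dmat j lam i s

lemma pascal_entry (L a b : ℕ) (hL : 1 ≤ L) (hab : b + 1 = a) :
    ((L + 1).choose a : ℤ) = ((L - 1 + 1).choose a : ℤ) + (L.choose b : ℤ) := by
  subst hab
  rw [show L - 1 + 1 = L by omega]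
  have := Nat.choose_succ_succ' L b
  push_cast [this]
  ring

lemma Dmat_rec (j : ℕ) (lam : Fin j → ℕ) (kc : Fin j)
    (h1 : ∀ i, i ≤ kc → lam i = lam kc) (hpos : 1 ≤ lam kc) :
    (Dmat j lam).det = (Dmat j (Function.update lam kc (lam kc - 1))).det
      + (Dmat (j - (kc.1+1))
          (fun r => lam ⟨kc.1+1+r.1, by have := r.isLt; have := kc.isLt; omega⟩)).det := by
  classical
  set L := lam kc with hL
  set lam' := Function.update lam kc (L - 1) with hlam'
  -- Step A : split the determinant along column kc
  have stepA : (Dmat j lam).det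
      = (Dmat j lam').det + (Bmat j lam kc.1 L kc.1).det := by
    have hA : Dmat j lam = (Dmat j lam).updateCol kc
        (fun i => Dmat j lam' i kc + Bmat j lam kc.1 L kc.1 i kc) := by
      ext i s
      rcases eq_or_ne s kc with rfl | hs
      · rw [Matrix.updateCol_self]
        simp only [Dmat, Bmat, Matrix.of_apply, hlam', Function.update_self]
        rcases Nat.lt_trichotomy i.1 (s.1+1) with hik | hik | hik
        · rw [if_pos (by omega), if_pos (by omega),
            if_pos (And.intro (le_refl _) (le_refl _)), if_pos (by omega)]
          exact pascal_entry L (s.1+1-i.1) (s.1-i.1) hpos (by omega)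
        · rw [if_pos (by omega), if_pos (by omega),
            if_pos (And.intro (le_refl _) (le_refl _)), if_neg (by omega)]
          rw [show s.1+1-i.1 = 0 by omega]
          simp
        · rw [if_neg (by omega), if_neg (by omega),
            if_pos (And.intro (le_refl _) (le_refl _)), if_neg (by omega)]
          simp
      · rw [Matrix.updateCol_ne hs]
    rw [hA]
    refine (Matrix.det_updateCol_add (Dmat j lam) kc
      (fun i => Dmat j lam' i kc) (fun i => Bmat j lam kc.1 L kc.1 i kc)).trans ?_
    congr 1
    · congr 1
      ext i s
      rcases eq_or_ne s kc with rfl | hs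
      · rw [Matrix.updateCol_self]
      · rw [Matrix.updateCol_ne hs]
        simp only [Dmat, Matrix.of_apply, hlam', Function.update_of_ne hs]
    · congr 1
      ext i s
      rcases eq_or_ne s kc with rfl | hs
      · rw [Matrix.updateCol_self]
      · rw [Matrix.updateCol_ne hs]
        simp only [Bmat, Matrix.of_apply]
        rw [if_neg]
        intro hcond
        exact hs (Fin.ext (by omega))
  -- Step B : column operations
  have stepB : ∀ t : ℕ, t ≤ kc.1 →
      (Bmat j lam kc.1 L t).det = (Bmat j lam kc.1 L 0).det := by
    have step : ∀ t : ℕ, t + 1 ≤ kc.1 →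
        (Bmat j lam kc.1 L (t+1)).det = (Bmat j lam kc.1 L t).det := by
      intro t ht
      have htj : t < j := by have := kc.isLt; omega
      have ht1j : t + 1 < j := by have := kc.isLt; omega
      have hij : (⟨t, htj⟩ : Fin j) ≠ ⟨t+1, ht1j⟩ := by
        simp [Fin.ext_iff]
      have hBt : Bmat j lam kc.1 L t = (Bmat j lam kc.1 L (t+1)).updateCol ⟨t, htj⟩
          (fun i => Bmat j lam kc.1 L (t+1) i ⟨t, htj⟩
            + (-1 : ℤ) • Bmat j lam kc.1 L (t+1) i ⟨t+1, ht1j⟩) := by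
        ext i s
        have hv1 : ((⟨t, htj⟩ : Fin j) : ℕ) = t := rfl
        have hv2 : ((⟨t+1, ht1j⟩ : Fin j) : ℕ) = t + 1 := rfl
        rcases eq_or_ne s ⟨t, htj⟩ with rfl | hs
        · rw [Matrix.updateCol_self]
          simp only [Bmat, Dmat, Matrix.of_apply, smul_eq_mul, hv1, hv2]
          rw [if_pos (And.intro (by omega) (le_refl _)),
            if_neg (by omega : ¬ ((t : ℕ) ≤ kc.1 ∧ t + 1 ≤ t)),
            if_pos (And.intro (by omega) (by omega))]
          have hlamt : lam ⟨t, htj⟩ = L := h1 _ (by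
            rw [Fin.le_def, hv1]; exact Nat.le_of_lt ht)
          rw [hlamt]
          rcases Nat.lt_trichotomy i.1 (t+1) with hik | hik | hik
          · rw [if_pos (by omega : (i:ℕ) ≤ t), if_pos (by omega : (i:ℕ) ≤ t+1),
              if_pos (by omega : (i:ℕ) ≤ t+1)]
            have hpa := pascal_entry L (t+1-i.1) (t-i.1) hpos (by omega)
            rw [show L - 1 + 1 = L by omega] at hpa
            rw [hpa]
            ring
          · rw [if_neg (by omega : ¬ (i:ℕ) ≤ t), if_pos (by omega : (i:ℕ) ≤ t+1),
              if_pos (by omega : (i:ℕ) ≤ t+1)]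
            rw [show t + 1 - i.1 = 0 by omega]
            simp
          · rw [if_neg (by omega : ¬ (i:ℕ) ≤ t), if_neg (by omega : ¬ (i:ℕ) ≤ t+1),
              if_neg (by omega : ¬ (i:ℕ) ≤ t+1)]
            ring
        · rw [Matrix.updateCol_ne hs]
          simp only [Bmat, Matrix.of_apply]
          have hst : s.1 ≠ t := fun hh => hs (Fin.ext hh)
          by_cases hc : (s : ℕ) ≤ kc.1 ∧ t + 1 ≤ (s : ℕ)
          · rw [if_pos hc, if_pos (And.intro hc.1 (by omega))]
          · rw [if_neg hc, if_neg (fun hc' => hc (And.intro hc'.1 (by omega)))]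
      rw [hBt]
      exact (Matrix.det_updateCol_add_smul_self _ hij (-1)).symm
    intro t
    induction t with
    | zero => intro _; rfl
    | succ t ih => intro h; rw [step t h]; exact ih (by omega)
  -- Step C : block decomposition
  have hkj : kc.1 + 1 ≤ j := kc.isLt
  have hsum : (kc.1 + 1) + (j - (kc.1+1)) = j := by omega
  have stepC : (Bmat j lam kc.1 L 0).det
      = (Dmat (j - (kc.1+1))
          (fun r => lam ⟨kc.1+1+r.1, by have := r.isLt; have := kc.isLt; omega⟩)).det := by
    set k := kc.1 + 1 with hk
    set jk := j - k with hjk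
    set tail : Fin jk → ℕ :=
      (fun r => lam ⟨kc.1+1+r.1, by have := r.isLt; have := kc.isLt; omega⟩) with htail
    set e : Fin k ⊕ Fin jk ≃ Fin j := finSumFinEquiv.trans (finCongr hsum) with he
    have he1 : ∀ x : Fin k, ((e (Sum.inl x)) : ℕ) = (x : ℕ) := by
      intro x; simp [he, finSumFinEquiv_apply_left]
    have he2 : ∀ y : Fin jk, ((e (Sum.inr y)) : ℕ) = k + (y : ℕ) := by
      intro y; simp [he, finSumFinEquiv_apply_right, Fin.natAdd]
    set A11 : Matrix (Fin k) (Fin k) ℤ :=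
      Matrix.of (fun i s => if (i : ℕ) ≤ (s : ℕ) then (L.choose ((s:ℕ) - i) : ℤ) else 0)
      with hA11
    set A12 : Matrix (Fin k) (Fin jk) ℤ :=
      Matrix.of (fun i s => ((tail s + 1).choose (k + (s:ℕ) + 1 - i) : ℤ)) with hA12
    have hblock : (Bmat j lam kc.1 L 0).submatrix e e
        = Matrix.fromBlocks A11 A12 0 (Dmat jk tail) := by
      ext i s
      cases i with
      | inl a =>
        cases s with
        | inl b =>
          simp only [Matrix.submatrix_apply, Matrix.fromBlocks_apply₁₁, Bmat, Matrix.of_apply,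
            hA11]
          rw [if_pos (And.intro (by have := he1 b; have := b.isLt; omega) (Nat.zero_le _))]
          rw [he1 a, he1 b]
        | inr b =>
          simp only [Matrix.submatrix_apply, Matrix.fromBlocks_apply₁₂, Bmat, Dmat,
            Matrix.of_apply, hA12]
          rw [if_neg (by have := he2 b; omega)]
          rw [if_pos (by have := he2 b; have := he1 a; have := a.isLt; omega)]
          rw [he1 a, he2 b]
          congr 2
      | inr a =>
        cases s with
        | inl b =>
          simp only [Matrix.submatrix_apply, Matrix.fromBlocks_apply₂₁, Bmat, Matrix.of_apply,
            Matrix.zero_apply]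
          rw [if_pos (And.intro (by have := he1 b; have := b.isLt; omega) (Nat.zero_le _))]
          rw [if_neg (by have := he1 b; have := he2 a; have := b.isLt; omega)]
        | inr b =>
          simp only [Matrix.submatrix_apply, Matrix.fromBlocks_apply₂₂, Bmat, Dmat,
            Matrix.of_apply]
          rw [if_neg (by have := he2 b; omega)]
          rw [he2 a, he2 b]
          have harg : k + (b:ℕ) + 1 - (k + (a:ℕ)) = (b:ℕ) + 1 - (a:ℕ) := by omega
          have hlameq : lam ⟨k + (b:ℕ), by have := b.isLt; omega⟩ = tail b := by
            rw [htail]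
          by_cases hab : (a : ℕ) ≤ (b : ℕ) + 1
          · rw [if_pos (by omega), if_pos hab, harg]
            congr 2
          · rw [if_neg (by omega), if_neg hab]
    have hdet1 : A11.det = 1 := by
      rw [Matrix.det_of_upperTriangular (by
        intro i s h
        simp only [hA11, Matrix.of_apply]
        rw [if_neg]
        exact fun hle => absurd hle (by simpa using h))]
      rw [Finset.prod_congr rfl (fun i _ => ?_), Finset.prod_const_one]
      simp [hA11]
    calc (Bmat j lam kc.1 L 0).det
        = ((Bmat j lam kc.1 L 0).submatrix e e).det :=
          (Matrix.det_submatrix_equiv_self e _).symm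
      _ = (Matrix.fromBlocks A11 A12 0 (Dmat jk tail)).det := by rw [hblock]
      _ = A11.det * (Dmat jk tail).det := Matrix.det_fromBlocks_zero₂₁ _ _ _
      _ = (Dmat jk tail).det := by rw [hdet1, one_mul]
  rw [stepA, stepB kc.1 (le_refl _), stepC]

lemma part1 (N : ℕ) : ∀ (j : ℕ) (lam : Fin j → ℕ), Antitone lam →
    j + ∑ i, lam i ≤ N → (Dmat j lam).det = (Fcount j lam : ℤ) := by
  induction N with
  | zero =>
    intro j lam _ hle
    have hj : j = 0 := by omega
    subst hj
    rw [Fcount_j0]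
    simp [Matrix.det_fin_zero]
  | succ N ih =>
    intro j lam hanti hle
    rcases Nat.eq_zero_or_pos j with hj | hj
    · subst hj
      rw [Fcount_j0]
      simp [Matrix.det_fin_zero]
    · set i0 : Fin j := ⟨0, hj⟩ with hi0
      rcases Nat.eq_zero_or_pos (lam i0) with hl0 | hl0
      · have hall : ∀ i, lam i = 0 := by
          intro i
          have := hanti (show i0 ≤ i from Fin.le_def.mpr (Nat.zero_le _))
          omega
        rw [Dmat_all_zero j lam hall, Fcount_all_zero j lam hall]
        norm_num
      · have hSne : (univ.filter (fun i => lam i = lam i0)).Nonempty :=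
          ⟨i0, by simp⟩
        set kc := (univ.filter (fun i => lam i = lam i0)).max' hSne with hkc
        have hkc0 : lam kc = lam i0 :=
          (Finset.mem_filter.mp (Finset.max'_mem _ hSne)).2
        have h1 : ∀ i, i ≤ kc → lam i = lam kc := by
          intro i hi
          have hub : lam i ≥ lam kc := hanti hi
          have hlb : lam i ≤ lam i0 := hanti (Fin.le_def.mpr (Nat.zero_le _))
          omega
        have h2 : ∀ i, kc < i → lam i < lam kc := by
          intro i hik
          have hub : lam i ≤ lam kc := hanti (le_of_lt hik)
          rcases Nat.lt_or_ge (lam i) (lam kc) with h | h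
          · exact h
          · exfalso
            have : lam i = lam i0 := by omega
            have hmem : i ∈ univ.filter (fun i => lam i = lam i0) := by
              simp [this]
            have := Finset.le_max' _ i hmem
            rw [← hkc] at this
            exact absurd hik (not_lt.mpr this)
        have hpos : 1 ≤ lam kc := by omega
        -- sums
        have hsum_upd : ∑ i, Function.update lam kc (lam kc - 1) i
            = (lam kc - 1) + ∑ i ∈ univ.erase kc, lam i := by
          rw [Finset.sum_update_of_mem (Finset.mem_univ kc)]
          congr 1
          apply Finset.sum_congr
          · rw [Finset.sdiff_singleton_eq_erase]
          · intro x _; rfl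
        have hsum_full : ∑ i, lam i = lam kc + ∑ i ∈ univ.erase kc, lam i :=
          (Finset.add_sum_erase univ lam (Finset.mem_univ kc)).symm
        -- tail sum bound
        have htail_sum : (∑ r : Fin (j - (kc.1+1)),
              lam ⟨kc.1+1+r.1, by have := r.isLt; have := kc.isLt; omega⟩) + lam kc
            ≤ ∑ i, lam i := by
          classical
          set g : Fin (j - (kc.1+1)) → Fin j :=
            fun r => ⟨kc.1+1+r.1, by have := r.isLt; have := kc.isLt; omega⟩ with hg
          have hginj : Function.Injective g := by
            intro x y hxy
            have := Fin.val_eq_of_eq hxy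
            exact Fin.ext (by simp [hg] at this ⊢; omega)
          have h1' : ∑ r, lam (g r) = ∑ i ∈ univ.image g, lam i :=
            (Finset.sum_image (fun x _ y _ h => hginj h)).symm
          have hkcnot : kc ∉ univ.image g := by
            simp only [Finset.mem_image, not_exists]
            rintro x ⟨-, hx⟩
            have := Fin.val_eq_of_eq hx
            simp [hg] at this
            omega
          calc (∑ r, lam (g r)) + lam kc
              = ∑ i ∈ insert kc (univ.image g), lam i := by
                rw [Finset.sum_insert hkcnot, h1']; ring
            _ ≤ ∑ i, lam i :=
                Finset.sum_le_sum_of_subset (Finset.subset_univ _)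
        -- antitone of update
        have hanti' : Antitone (Function.update lam kc (lam kc - 1)) := by
          intro a b hab
          by_cases hbk : b = kc
          · rw [hbk, Function.update_self]
            by_cases hak : a = kc
            · rw [hak, Function.update_self]
            · rw [Function.update_of_ne hak]
              have h3 := hanti (show a ≤ kc from hbk ▸ hab)
              have h4 := h1 a (hbk ▸ hab)
              omega
          · rw [Function.update_of_ne hbk]
            by_cases hak : a = kc
            · rw [hak, Function.update_self]
              have hbgt : kc < b :=
                lt_of_le_of_ne (hak ▸ hab) (fun h => hbk h.symm)
              have := h2 b hbgt
              omega
            · rw [Function.update_of_ne hak]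
              exact hanti hab
        have htanti : Antitone (fun r : Fin (j - (kc.1+1)) =>
            lam ⟨kc.1+1+r.1, by have := r.isLt; have := kc.isLt; omega⟩) := by
          intro a b hab
          exact hanti (Fin.le_def.mpr (by simp; exact Fin.le_def.mp hab))
        rw [Dmat_rec j lam kc h1 hpos, Fcount_rec j lam kc h1 h2 hpos]
        push_cast
        rw [ih j (Function.update lam kc (lam kc - 1)) hanti' (by omega),
          ih (j - (kc.1+1)) _ htanti (by
            have hk := kc.isLt
            omega)]

lemma strictmono_fin_add {j : ℕ} {f : Fin j → ℕ} (hf : StrictMono f) :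
    ∀ x y : Fin j, x ≤ y → f x + (y.1 - x.1) ≤ f y := by
  have key : ∀ d : ℕ, ∀ x y : Fin j, y.1 = x.1 + d → f x + d ≤ f y := by
    intro d
    induction d with
    | zero =>
      intro x y h
      have : x = y := Fin.ext (by omega)
      subst this
      omega
    | succ d ihd =>
      intro x y h
      have hy' : x.1 + d < j := by have := y.isLt; omega
      have h1 := ihd x ⟨x.1 + d, hy'⟩ rfl
      have h2 : f ⟨x.1 + d, hy'⟩ < f y := hf (Fin.lt_def.mpr (by simp; omega))
      omega
  intro x y hxy
  have := key (y.1 - x.1) x y (by have := Fin.le_def.mp hxy; omega)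
  exact this

lemma part2 (j m : ℕ) (lam : Fin j → ℕ) (hanti : Antitone lam) (hm : ∀ i, lam i ≤ m) :
    (((Finset.Icc 1 (j + m)).powersetCard j).filter (fun T =>
        ∀ p ∈ Finset.Icc 1 (j + m), (T.filter (· ≤ p)).card
          ≤ (((Finset.univ : Finset (Fin j)).image
                (fun i : Fin j => m + 1 + (i : ℕ) - lam i)).filter (· ≤ p)).card)).card
      = Fcount j lam := by
  classical
  set a : Fin j → ℕ := fun i : Fin j => m + 1 + (i : ℕ) - lam i with ha
  have hav : ∀ i, a i + lam i = m + 1 + i.1 := by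
    intro i; have := hm i; simp only [ha]; omega
  have hamono : StrictMono a := by
    intro x y hxy
    have h1 := hanti (le_of_lt hxy)
    have h2 := hm x; have h3 := hm y
    have h4 := Fin.lt_def.mp hxy
    simp only [ha]; omega
  have haA : ∀ p : ℕ, ((univ.image a).filter (· ≤ p)).card
      = (univ.filter (fun i => a i ≤ p)).card := by
    intro p
    rw [Finset.filter_image]
    exact Finset.card_image_of_injective _ hamono.injective
  rw [Fcount]
  symm
  refine Finset.card_bij (i := fun w _ => univ.image (fun i : Fin j => m + 1 + i.1 - w i))
    ?_ ?_ ?_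
  · -- maps into
    intro w hw
    simp only [Finset.mem_filter, Fintype.mem_piFinset, Finset.mem_range] at hw
    obtain ⟨hbd, hantiw⟩ := hw
    have hwle : ∀ i, w i ≤ lam i := fun i => by have := hbd i; omega
    have htmono : StrictMono (fun i : Fin j => m + 1 + i.1 - w i) := by
      intro x y hxy
      show m + 1 + x.1 - w x < m + 1 + y.1 - w y
      have h1 := hantiw x y (le_of_lt hxy)
      have h2 := hwle x; have h3 := hwle y
      have h4 := hm x; have h5 := hm y
      have h6 := Fin.lt_def.mp hxy
      omega
    simp only [Finset.mem_filter]
    constructor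
    · rw [Finset.mem_powersetCard]
      constructor
      · intro x hx
        rw [Finset.mem_image] at hx
        obtain ⟨i, -, rfl⟩ := hx
        rw [Finset.mem_Icc]
        have := hwle i; have := hm i; have := i.isLt
        omega
      · rw [Finset.card_image_of_injective _ htmono.injective]
        simp
    · intro p _
      have he : ((univ.image (fun i : Fin j => m + 1 + i.1 - w i)).filter (· ≤ p)).card
          = (univ.filter (fun i => m + 1 + i.1 - w i ≤ p)).card := by
        rw [Finset.filter_image]
        exact Finset.card_image_of_injective _ htmono.injective
      rw [he, haA]
      apply Finset.card_le_card
      intro x hx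
      simp only [Finset.mem_filter] at hx ⊢
      refine ⟨hx.1, ?_⟩
      have := hx.2
      have h2 := hwle x; have h3 := hm x
      simp only [ha]
      omega
  · -- injective
    intro w1 h1 w2 h2 heq
    simp only [Finset.mem_filter, Fintype.mem_piFinset, Finset.mem_range] at h1 h2
    have hwle1 : ∀ i, w1 i ≤ lam i := fun i => by have := h1.1 i; omega
    have hwle2 : ∀ i, w2 i ≤ lam i := fun i => by have := h2.1 i; omega
    have htmono1 : StrictMono (fun i : Fin j => m + 1 + i.1 - w1 i) := by
      intro x y hxy
      show m + 1 + x.1 - w1 x < m + 1 + y.1 - w1 y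
      have := h1.2 x y (le_of_lt hxy)
      have := hwle1 x; have := hwle1 y; have := hm x; have := hm y
      have := Fin.lt_def.mp hxy
      omega
    have htmono2 : StrictMono (fun i : Fin j => m + 1 + i.1 - w2 i) := by
      intro x y hxy
      show m + 1 + x.1 - w2 x < m + 1 + y.1 - w2 y
      have := h2.2 x y (le_of_lt hxy)
      have := hwle2 x; have := hwle2 y; have := hm x; have := hm y
      have := Fin.lt_def.mp hxy
      omega
    have hcard : (univ.image (fun i : Fin j => m + 1 + i.1 - w1 i)).card = j := by
      rw [Finset.card_image_of_injective _ htmono1.injective]; simp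
    have hu1 := Finset.orderEmbOfFin_unique hcard
      (f := fun i : Fin j => m + 1 + i.1 - w1 i)
      (fun x => Finset.mem_image_of_mem _ (Finset.mem_univ x)) htmono1
    have heq' : univ.image (fun i : Fin j => m + 1 + i.1 - w1 i)
        = univ.image (fun i : Fin j => m + 1 + i.1 - w2 i) := heq
    have hu2 := Finset.orderEmbOfFin_unique hcard
      (f := fun i : Fin j => m + 1 + i.1 - w2 i)
      (fun x => heq'.symm ▸ Finset.mem_image_of_mem _ (Finset.mem_univ x)) htmono2
    funext i
    have : m + 1 + i.1 - w1 i = m + 1 + i.1 - w2 i := by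
      rw [congrFun hu1 i, congrFun hu2 i]
    have := hwle1 i; have := hwle2 i; have := hm i
    omega
  · -- surjective
    intro T hT
    simp only [Finset.mem_filter] at hT
    obtain ⟨hTmem, hdom⟩ := hT
    rw [Finset.mem_powersetCard] at hTmem
    obtain ⟨hTsub, hTcard⟩ := hTmem
    set tf : Fin j → ℕ := fun i => T.orderEmbOfFin hTcard i with htf
    have htfmono : StrictMono tf := (T.orderEmbOfFin hTcard).strictMono
    have htfmem : ∀ i, tf i ∈ T := fun i => Finset.orderEmbOfFin_mem T hTcard i
    have hbounds : ∀ i, 1 ≤ tf i ∧ tf i ≤ j + m := by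
      intro i
      have := hTsub (htfmem i)
      rw [Finset.mem_Icc] at this
      exact this
    have himg : univ.image tf = T := by
      apply Finset.eq_of_subset_of_card_le
      · intro x hx
        rw [Finset.mem_image] at hx
        obtain ⟨i, -, rfl⟩ := hx
        exact htfmem i
      · rw [Finset.card_image_of_injective _ htfmono.injective, hTcard]
        simp
    have hup : ∀ i : Fin j, tf i ≤ m + 1 + i.1 := by
      intro i
      have hlt : j - 1 < j := by have := i.isLt; omega
      have hlast := strictmono_fin_add htfmono i ⟨j-1, hlt⟩
        (Fin.le_def.mpr (by simp; have := i.isLt; omega))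
      have h2 := (hbounds ⟨j-1, hlt⟩).2
      have := i.isLt
      simp at hlast
      omega
    have hTp : ∀ p, (T.filter (· ≤ p)).card
        = (univ.filter (fun i => tf i ≤ p)).card := by
      intro p
      rw [← himg, Finset.filter_image]
      exact Finset.card_image_of_injective _ htfmono.injective
    have hget : ∀ i, a i ≤ tf i := by
      intro i
      by_contra hcon
      push_neg at hcon
      have hp : tf i ∈ Finset.Icc 1 (j + m) := hTsub (htfmem i)
      have hd := hdom (tf i) hp
      rw [hTp, haA] at hd
      have hsub1 : (univ.filter (fun x : Fin j => x ≤ i))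
          ⊆ (univ.filter (fun x => tf x ≤ tf i)) := by
        intro x hx
        simp only [Finset.mem_filter, Finset.mem_univ, true_and] at hx ⊢
        exact htfmono.monotone hx
      have hsub2 : (univ.filter (fun x : Fin j => a x ≤ tf i))
          ⊆ (univ.filter (fun x : Fin j => x < i)) := by
        intro x hx
        simp only [Finset.mem_filter, Finset.mem_univ, true_and] at hx ⊢
        by_contra hxi
        push_neg at hxi
        have := hamono.monotone hxi
        omega
      have he1 : (univ.filter (fun x : Fin j => x ≤ i)) = Finset.Iic i := by
        ext x; simp
      have he2 : (univ.filter (fun x : Fin j => x < i)) = Finset.Iio i := by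
        ext x; simp
      have hc1 := Finset.card_le_card hsub1
      have hc2 := Finset.card_le_card hsub2
      rw [he1, Fin.card_Iic] at hc1
      rw [he2, Fin.card_Iio] at hc2
      omega
    refine ⟨fun i => m + 1 + i.1 - tf i, ?_, ?_⟩
    · simp only [Finset.mem_filter, Fintype.mem_piFinset, Finset.mem_range]
      constructor
      · intro i
        have h1 := hget i
        have h2 := hav i
        have h3 := hup i
        omega
      · intro x y hxy
        have h1 := strictmono_fin_add htfmono x y hxy
        have h2 := hup y
        have h3 := Fin.le_def.mp hxy
        omega
    · rw [← himg]
      apply Finset.image_congr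
      intro x _
      show m + 1 + x.1 - (m + 1 + x.1 - tf x) = tf x
      have := hup x
      omega

/-- Lindström–Gessel–Viennot determinantal formula: for a partition
`λ = (λ_1 ≥ ⋯ ≥ λ_j)` with all parts `≤ m`, the determinant of the `j × j` matrix
`A_λ` with entries `(A_λ)_{i,j'} = binom(λ_{j'} + 1, j' − i + 1)` equals the number of
monotone lattice paths weakly dominating the path `P(X)`, where `X ∈ {0,2}^{j+m}` is the
word whose 2's are at positions `a_i = m + i − λ_i` (1-indexed). Paths are encoded by the
set of positions of their south steps; a path `T` weakly dominates `P(X)` (whose south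
steps are at the positions `a_i`) when every prefix of `T` has at most as many south steps
as the corresponding prefix of `P(X)`. -/
theorem det_counts_dominating_paths (j m : ℕ) (lam : Fin j → ℕ)
    (hanti : Antitone lam) (hm : ∀ i, lam i ≤ m) :
    Matrix.det (Matrix.of fun i i' : Fin j =>
        if (i : ℕ) ≤ (i' : ℕ) + 1 then (((lam i' + 1).choose ((i' : ℕ) + 1 - i)) : ℤ) else 0)
      = ((((Finset.Icc 1 (j + m)).powersetCard j).filter (fun T =>
          ∀ p ∈ Finset.Icc 1 (j + m), (T.filter (· ≤ p)).card
            ≤ (((Finset.univ : Finset (Fin j)).image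
                  (fun i : Fin j => m + 1 + (i : ℕ) - lam i)).filter (· ≤ p)).card)).card : ℤ) := by
  have h1 := part1 (j + ∑ i, lam i) j lam hanti (le_refl _)
  have h2 := part2 j m lam hanti hm
  rw [h2]
  exact h1
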